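/- For every tree T and ρ ∈ (0,1], if T has at least two vertices of degree ≥ 1/ρ, then T can be split at some vertex u of degree ≥ 1/ρ into two subtrees K and R = T − V(K) with V(K) ∪ V(R) = V(T), each containing a vertex of degree (in T) at least 1/ρ; in particular n(K) ≥ 1/ρ and n(R) ≥ 1/ρ. -/

import Mathlib

open scoped Classical

variable {V : Type*} [Fintype V]

/-- A set `S` is closed for `(G, φ)`: every vertex outside `S` has fewer than
`φ u` neighbors inside `S`. -/
def IsClosedSet (G : SimpleGraph V) (φ : V → ℕ) (S : Finset V) : Prop :=
  ∀ u ∉ S, (S.filter (fun w => G.Adj u w)).card < φ u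

/-- The closure `H(D)`: the intersection of all closed supersets of `D`. -/
noncomputable def Hcl (G : SimpleGraph V) (φ : V → ℕ) (D : Finset V) : Finset V :=
  Finset.univ.filter (fun v => ∀ S : Finset V, D ⊆ S → IsClosedSet G φ S → v ∈ S)

/-- The graph `T` with all edges at `u` removed. -/
def delVert (T : SimpleGraph V) (u : V) : SimpleGraph V where
  Adj x y := T.Adj x y ∧ x ≠ u ∧ y ≠ u
  symm := by
    constructor
    rintro x y ⟨h, hx, hy⟩
    exact ⟨h.symm, hy, hx⟩
  loopless := by
    constructor
    rintro x ⟨h, _, _⟩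
    exact T.loopless.irrefl x h

lemma delVert_le (T : SimpleGraph V) (u : V) : delVert T u ≤ T := fun _ _ h => h.1

lemma delVert_support_ne (T : SimpleGraph V) (u : V) :
    ∀ {a b : V} (p : (delVert T u).Walk a b), a ≠ u → ∀ x ∈ p.support, x ≠ u := by
  intro a b p
  induction p with
  | nil =>
    intro ha x hx
    simp only [SimpleGraph.Walk.support_nil, List.mem_singleton] at hx
    subst hx; exact ha
  | cons h p ih =>
    intro ha x hx
    simp only [SimpleGraph.Walk.support_cons, List.mem_cons] at hx
    rcases hx with rfl | hx
    · exact ha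
    · exact ih h.2.2 x hx

lemma reach_delVert_of_avoid (T : SimpleGraph V) (u : V) :
    ∀ {a b : V} (q : T.Walk a b), (∀ x ∈ q.support, x ≠ u) → (delVert T u).Reachable a b := by
  intro a b q
  induction q with
  | nil => intro _; exact SimpleGraph.Reachable.refl _
  | cons h p ih =>
    intro hsup
    refine (SimpleGraph.Adj.reachable (G := delVert T u) ⟨h, ?_, ?_⟩).trans
      (ih fun x hx => hsup x (by simp [SimpleGraph.Walk.support_cons, hx]))
    · exact hsup _ (by simp [SimpleGraph.Walk.support_cons])
    · exact hsup _ (by simp [SimpleGraph.Walk.support_cons,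
        SimpleGraph.Walk.start_mem_support])

theorem stmt18 (ρ : ℝ) (hρ0 : 0 < ρ) (hρ1 : ρ ≤ 1)
    (T : SimpleGraph V) (hT : T.IsTree)
    (h2 : 2 ≤ (Finset.univ.filter (fun u => (1 : ℝ) / ρ ≤ (T.degree u : ℝ))).card) :
    ∃ (u : V) (K R : Finset V), (1 : ℝ) / ρ ≤ (T.degree u : ℝ) ∧
      K ∪ R = Finset.univ ∧ Disjoint K R ∧ u ∈ R ∧
      (∃ a ∈ K, (1 : ℝ) / ρ ≤ (T.degree a : ℝ)) ∧
      (∃ b ∈ R, (1 : ℝ) / ρ ≤ (T.degree b : ℝ)) ∧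
      (T.induce (K : Set V)).Connected ∧ (T.induce (R : Set V)).Connected ∧
      (1 : ℝ) / ρ ≤ K.card ∧ (1 : ℝ) / ρ ≤ R.card := by
  classical
  -- extract two distinct high-degree vertices u and v
  obtain ⟨u, hu, v, hv, huv⟩ := Finset.one_lt_card.mp (lt_of_lt_of_le one_lt_two h2)
  rw [Finset.mem_filter] at hu hv
  have hdu : (1 : ℝ) / ρ ≤ (T.degree u : ℝ) := hu.2
  have hdv : (1 : ℝ) / ρ ≤ (T.degree v : ℝ) := hv.2
  have hvu : v ≠ u := fun h => huv h.symm
  have hρinv : (1 : ℝ) ≤ 1 / ρ := by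
    rw [le_div_iff₀ hρ0]; linarith
  have hdu1 : 1 ≤ T.degree u := by exact_mod_cast hρinv.trans hdu
  have hdv1 : 1 ≤ T.degree v := by exact_mod_cast hρinv.trans hdv
  set G := delVert T u with hG
  set K : Finset V := Finset.univ.filter (fun w => G.Reachable v w) with hK
  set R : Finset V := Kᶜ with hR
  have hmemK : ∀ w, w ∈ K ↔ G.Reachable v w := by
    intro w; simp [hK]
  -- members of K are ≠ u
  have hKne : ∀ w ∈ K, w ≠ u := by
    intro w hw
    obtain ⟨q⟩ := (hmemK w).mp hw
    exact delVert_support_ne T u q hvu w q.end_mem_support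
  have huR : u ∈ R := by
    simp only [hR, Finset.mem_compl]
    intro h
    exact hKne u h rfl
  have hvK : v ∈ K := (hmemK v).mpr (SimpleGraph.Reachable.refl v)
  -- any vertex on a T-walk to u which avoids u except at its position: membership in R
  have hRmem : ∀ w, w ∈ R ↔ w ∉ K := by intro w; simp [hR]
  -- Connectivity of K
  have hKconn : (T.induce (K : Set V)).Connected := by
    apply SimpleGraph.induce_connected_of_patches v (by simpa using hvK)
    intro w hw
    have hwK : w ∈ K := by simpa using hw
    obtain ⟨q⟩ := (hmemK w).mp hwK
    have hedges : ∀ e ∈ q.edges, e ∈ T.edgeSet := fun e he =>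
      SimpleGraph.edgeSet_mono (delVert_le T u) (q.edges_subset_edgeSet he)
    let p : T.Walk v w := q.transfer T hedges
    have hpsup : p.support = q.support := q.support_transfer hedges
    have hsub : {x | x ∈ p.support} ⊆ (K : Set V) := by
      intro x hx
      simp only [Set.mem_setOf_eq, hpsup] at hx
      have : G.Reachable v x := ⟨q.takeUntil x hx⟩
      simpa using (hmemK x).mpr this
    refine ⟨{x | x ∈ p.support}, hsub, p.start_mem_support, p.end_mem_support, ?_⟩
    exact (p.connected_induce_support _ _)
  -- key: any vertex x in K on a path from w to u implies w ∈ K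
  have hpath_in_R : ∀ w, w ∈ R → ∀ (p : T.Walk w u), p.IsPath →
      ∀ x ∈ p.support, x ∈ R := by
    intro w hwR p hp x hx
    rw [hRmem]
    intro hxK
    have hxu : x ≠ u := hKne x hxK
    -- the prefix of p up to x avoids u
    have hunotake : u ∉ (p.takeUntil x hx).support := by
      intro hcon
      have hspec := p.take_spec hx
      have hnodup := hp.support_nodup
      rw [← hspec, SimpleGraph.Walk.support_append] at hnodup
      have hdisj := List.disjoint_of_nodup_append hnodup
      have humem : u ∈ (p.dropUntil x hx).support := (p.dropUntil x hx).end_mem_support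
      have : u ∈ (p.dropUntil x hx).support.tail := by
        have hsupcons := (p.dropUntil x hx).support_eq_cons
        rw [hsupcons] at humem
        rcases List.mem_cons.mp humem with rfl | h
        · exact absurd rfl hxu
        · exact h
      exact hdisj hcon this
    have havoid : ∀ y ∈ (p.takeUntil x hx).support, y ≠ u := by
      intro y hy h; exact hunotake (h ▸ hy)
    have hwx : G.Reachable w x := reach_delVert_of_avoid T u (p.takeUntil x hx) havoid
    have hwK : w ∈ K := (hmemK w).mpr ((((hmemK x).mp hxK)).trans hwx.symm)
    exact (hRmem w).mp hwR hwK
  -- Connectivity of R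
  have hRconn : (T.induce (R : Set V)).Connected := by
    apply SimpleGraph.induce_connected_of_patches u (by simpa using huR)
    intro w hw
    have hwR : w ∈ R := by simpa using hw
    obtain ⟨q⟩ := hT.isConnected.preconnected w u
    let p : T.Walk w u := q.toPath
    have hp : p.IsPath := q.toPath.2
    have hsub : {x | x ∈ p.support} ⊆ (R : Set V) := by
      intro x hx
      simp only [Set.mem_setOf_eq] at hx
      simpa using hpath_in_R w hwR p hp x hx
    refine ⟨{x | x ∈ p.support}, hsub, p.end_mem_support, p.start_mem_support, ?_⟩
    exact (p.connected_induce_support _ _)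
  -- K contains all neighbors of v except u
  have hnbrK : ∀ w ∈ (T.neighborFinset v).erase u, w ∈ K := by
    intro w hw
    rw [Finset.mem_erase, SimpleGraph.mem_neighborFinset] at hw
    exact (hmemK w).mpr (SimpleGraph.Adj.reachable ⟨hw.2, hvu, hw.1⟩)
  have hKsub : insert v ((T.neighborFinset v).erase u) ⊆ K := by
    intro x hx
    rcases Finset.mem_insert.mp hx with rfl | hx
    · exact hvK
    · exact hnbrK x hx
  have hKcard : T.degree v ≤ K.card := by
    have h1 : v ∉ (T.neighborFinset v).erase u := by
      intro h
      have := Finset.mem_of_mem_erase h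
      rw [SimpleGraph.mem_neighborFinset] at this
      exact T.loopless.irrefl v this
    have h2' : (T.neighborFinset v).card - 1 ≤ ((T.neighborFinset v).erase u).card :=
      Finset.pred_card_le_card_erase
    have h3 := Finset.card_le_card hKsub
    rw [Finset.card_insert_of_notMem h1] at h3
    have : T.degree v - 1 + 1 ≤ K.card := by
      rw [SimpleGraph.degree] at *
      omega
    omega
  -- u has at most one neighbor in K
  have hone : ((T.neighborFinset u) ∩ K).card ≤ 1 := by
    rw [Finset.card_le_one]
    intro a ha b hb
    by_contra hab
    rw [Finset.mem_inter, SimpleGraph.mem_neighborFinset] at ha hb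
    have hau : a ≠ u := hKne a ha.2
    -- G-reachability from a to b, transfer to a T-path avoiding u
    have hreach : G.Reachable a b :=
      (((hmemK a).mp ha.2).symm.trans ((hmemK b).mp hb.2))
    obtain ⟨q⟩ := hreach
    have hedges : ∀ e ∈ q.edges, e ∈ T.edgeSet := fun e he =>
      SimpleGraph.edgeSet_mono (delVert_le T u) (q.edges_subset_edgeSet he)
    let tq : T.Walk a b := q.transfer T hedges
    have htqsup : tq.support = q.support := q.support_transfer hedges
    let tp : T.Path a b := tq.toPath
    have htpsub : (tp : T.Walk a b).support ⊆ tq.support := tq.support_toPath_subset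
    have hnu : u ∉ (tp : T.Walk a b).support := by
      intro h
      have := htpsub h
      rw [htqsup] at this
      exact delVert_support_ne T u q hau u this rfl
    -- two distinct paths from u to b
    have hP2 : (SimpleGraph.Walk.cons ha.1 (tp : T.Walk a b)).IsPath := tp.2.cons hnu
    have heq := hT.IsAcyclic.path_unique ⟨_, hP2⟩ (SimpleGraph.Path.singleton hb.1)
    have hsupeq := congrArg (fun P : T.Path u b => (P : T.Walk u b).support) heq
    simp only [SimpleGraph.Walk.support_cons, SimpleGraph.Path.singleton] at hsupeq
    have : (tp : T.Walk a b).support = [b] := by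
      have := hsupeq
      simp [SimpleGraph.Walk.support_cons] at this
      simpa using this
    have hamem : a ∈ (tp : T.Walk a b).support := (tp : T.Walk a b).start_mem_support
    rw [this, List.mem_singleton] at hamem
    exact hab hamem
  -- R contains u and all neighbors of u outside K
  have hRsub : insert u ((T.neighborFinset u) \ K) ⊆ R := by
    intro x hx
    rcases Finset.mem_insert.mp hx with rfl | hx
    · exact huR
    · rw [hRmem]; exact (Finset.mem_sdiff.mp hx).2
  have hRcard : T.degree u ≤ R.card := by
    have h1 : u ∉ (T.neighborFinset u) \ K := by
      intro h
      have := (Finset.mem_sdiff.mp h).1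
      rw [SimpleGraph.mem_neighborFinset] at this
      exact T.loopless.irrefl u this
    have h2' := Finset.card_inter_add_card_sdiff (T.neighborFinset u) K
    have h3 := Finset.card_le_card hRsub
    rw [Finset.card_insert_of_notMem h1] at h3
    rw [SimpleGraph.degree] at *
    omega
  refine ⟨u, K, R, hdu, ?_, ?_, huR, ⟨v, hvK, hdv⟩, ⟨u, huR, hdu⟩, hKconn, hRconn, ?_, ?_⟩
  · simp [hR]
  · exact disjoint_compl_right
  · exact hdv.trans (by exact_mod_cast hKcard)
  · exact hdu.trans (by exact_mod_cast hRcard)
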